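/- Let f : M → M be a hyperbolic homeomorphism with local product structure on a compact metric space (M,d), let A, B : M → GL(d,ℝ) be ν-Hölder continuous, α an automorphism of GL(d,ℝ), and suppose the α-twisted cocycles A_α and B_α are fiber-bunched. Suppose x ∈ M is a fixed point of f with A(x) = B(x). For y ∈ W^s(x) define P(y) := H^{s,A,α}_{xy} · (H^{s,B,α}_{xy})^{-1}. Then A_α^n(y) = P(f^n(y)) · B_α^n(y) · α^n(P(y))^{-1} for every y ∈ W^s(x) and every n ∈ ℕ. -/

import Mathlib

open scoped Matrix.Norms.L2Operator

noncomputable section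

/-- The `α`-twisted cocycle generated by `A` over `f`, at nonnegative times. -/
def twcN {M G : Type*} [Group G] (f : Equiv.Perm M) (α : MulAut G) (A : M → G) :
    ℕ → M → G
  | 0, _ => 1
  | n + 1, x => A ((f ^ n) x) * α (twcN f α A n x)

/-- The `α`-twisted cocycle generated by `A` over `f`, at all integer times. -/
def twc {M G : Type*} [Group G] (f : Equiv.Perm M) (α : MulAut G) (A : M → G) :
    ℤ → M → G
  | Int.ofNat n, x => twcN f α A n x
  | Int.negSucc n, x =>
      (α ^ (Int.negSucc n)) ((twcN f α A (n + 1) ((f ^ (Int.negSucc n)) x))⁻¹)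

/-- The local stable set `W^s_ε(x)`. -/
def localStable {M : Type*} [MetricSpace M] (f : Equiv.Perm M) (ε : ℝ) (x : M) :
    Set M :=
  {y | ∀ n : ℕ, dist ((f ^ n) x) ((f ^ n) y) ≤ ε}

/-- The local unstable set `W^u_ε(x)`. -/
def localUnstable {M : Type*} [MetricSpace M] (f : Equiv.Perm M) (ε : ℝ) (x : M) :
    Set M :=
  {y | ∀ n : ℕ, dist ((f⁻¹ ^ n) x) ((f⁻¹ ^ n) y) ≤ ε}

/-- The global stable set `W^s(x) = ⋃_{n ≥ 0} f^{-n}(W^s_ε(f^n(x)))`. -/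
def globalStable {M : Type*} [MetricSpace M] (f : Equiv.Perm M) (ε : ℝ) (x : M) :
    Set M :=
  {y | ∃ n : ℕ, (f ^ n) y ∈ localStable f ε ((f ^ n) x)}

/-- The global unstable set `W^u(x) = ⋃_{n ≥ 0} f^{n}(W^u_ε(f^{-n}(x)))`. -/
def globalUnstable {M : Type*} [MetricSpace M] (f : Equiv.Perm M) (ε : ℝ) (x : M) :
    Set M :=
  {y | ∃ n : ℕ, (f⁻¹ ^ n) y ∈ localUnstable f ε ((f⁻¹ ^ n) x)}

/-- `f` is a hyperbolic homeomorphism with local product structure, with constants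
`C, ε, λ, τ`. -/
structure IsHyperbolicLPS {M : Type*} [MetricSpace M] (f : M ≃ₜ M)
    (C ε lam τ : ℝ) : Prop where
  C_pos : 0 < C
  eps_pos : 0 < ε
  lam_pos : 0 < lam
  tau_pos : 0 < τ
  stable_contr : ∀ x y₁ y₂ : M, y₁ ∈ localStable f.toEquiv ε x →
    y₂ ∈ localStable f.toEquiv ε x → ∀ n : ℕ,
      dist ((f.toEquiv ^ n) y₁) ((f.toEquiv ^ n) y₂) ≤
        C * Real.exp (-lam * n) * dist y₁ y₂
  unstable_contr : ∀ x y₁ y₂ : M, y₁ ∈ localUnstable f.toEquiv ε x →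
    y₂ ∈ localUnstable f.toEquiv ε x → ∀ n : ℕ,
      dist ((f.toEquiv⁻¹ ^ n) y₁) ((f.toEquiv⁻¹ ^ n) y₂) ≤
        C * Real.exp (-lam * n) * dist y₁ y₂
  bracket : ∃ br : {p : M × M // dist p.1 p.2 ≤ τ} → M, Continuous br ∧
    ∀ p : {p : M × M // dist p.1 p.2 ≤ τ},
      localStable f.toEquiv ε p.1.1 ∩ localUnstable f.toEquiv ε p.1.2 = {br p}

/-- `A` is `ν`-Hölder continuous (w.r.t. the operator norm on matrices). -/
def IsHolder {M : Type*} [MetricSpace M] {d : ℕ} (ν : ℝ)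
    (A : M → GL (Fin d) ℝ) : Prop :=
  ∃ C > 0, ∀ x y : M,
    ‖(A x : Matrix (Fin d) (Fin d) ℝ) - (A y : Matrix (Fin d) (Fin d) ℝ)‖ ≤
      C * dist x y ^ ν

/-- The fiber-bunching inequalities (i), (ii), (iii) with constants `ρ, θ`. -/
def FiberBunchedWith {M : Type*} [MetricSpace M] {d : ℕ} (f : Equiv.Perm M)
    (α : MulAut (GL (Fin d) ℝ)) (A : M → GL (Fin d) ℝ) (ρ θ : ℝ) : Prop :=
  ∃ C > 0,
    (∀ (n : ℤ) (x : M),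
      ‖(((α ^ (-n)) (twc f α A n x) : GL (Fin d) ℝ) : Matrix (Fin d) (Fin d) ℝ)‖ *
        ‖(((α ^ (-n)) ((twc f α A n x)⁻¹) : GL (Fin d) ℝ) : Matrix (Fin d) (Fin d) ℝ)‖ <
        C * Real.exp (θ * |(n : ℝ)|)) ∧
    (∀ (n : ℤ) (T₁ T₂ : GL (Fin d) ℝ),
      ‖(((α ^ n) T₁ : GL (Fin d) ℝ) : Matrix (Fin d) (Fin d) ℝ) -
          (((α ^ n) T₂ : GL (Fin d) ℝ) : Matrix (Fin d) (Fin d) ℝ)‖ ≤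
        C * Real.exp (ρ * |(n : ℝ)|) *
          ‖(T₁ : Matrix (Fin d) (Fin d) ℝ) - (T₂ : Matrix (Fin d) (Fin d) ℝ)‖) ∧
    (∀ (n : ℤ) (T : GL (Fin d) ℝ),
      ‖(((α ^ n) T : GL (Fin d) ℝ) : Matrix (Fin d) (Fin d) ℝ)‖ ≤
        C * Real.exp (ρ * |(n : ℝ)|) * ‖(T : Matrix (Fin d) (Fin d) ℝ)‖)

/-- The twisted cocycle generated by `A` is fiber-bunched. -/
def FiberBunched {M : Type*} [MetricSpace M] {d : ℕ} (f : Equiv.Perm M)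
    (α : MulAut (GL (Fin d) ℝ)) (A : M → GL (Fin d) ℝ) (ν lam : ℝ) : Prop :=
  ∃ ρ θ : ℝ, 0 < ρ ∧ 0 < θ ∧ 5 * ρ + 2 * θ < ν * lam ∧ FiberBunchedWith f α A ρ θ

/-- `H` is the stable holonomy `H^{s,A,α}_{a b}`. -/
def IsStableHol {M : Type*} [MetricSpace M] {d : ℕ} (f : Equiv.Perm M)
    (α : MulAut (GL (Fin d) ℝ)) (A : M → GL (Fin d) ℝ) (a b : M)
    (H : GL (Fin d) ℝ) : Prop :=
  Filter.Tendsto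
    (fun n : ℕ =>
      (((α ^ (-(n : ℤ))) ((twc f α A n b)⁻¹ * twc f α A n a) : GL (Fin d) ℝ) :
        Matrix (Fin d) (Fin d) ℝ))
    Filter.atTop (nhds (H : Matrix (Fin d) (Fin d) ℝ))

/-- `H` is the unstable holonomy `H^{u,A,α}_{a b}`. -/
def IsUnstableHol {M : Type*} [MetricSpace M] {d : ℕ} (f : Equiv.Perm M)
    (α : MulAut (GL (Fin d) ℝ)) (A : M → GL (Fin d) ℝ) (a b : M)
    (H : GL (Fin d) ℝ) : Prop :=
  Filter.Tendsto
    (fun n : ℕ =>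
      (((α ^ (n : ℤ)) ((twc f α A (-(n : ℤ)) b)⁻¹ * twc f α A (-(n : ℤ)) a) :
          GL (Fin d) ℝ) : Matrix (Fin d) (Fin d) ℝ))
    Filter.atTop (nhds (H : Matrix (Fin d) (Fin d) ℝ))

end


section Aux

open Filter

variable {M : Type*} {G : Type*} [Group G]

lemma perm_pow_apply (f : Equiv.Perm M) (a b : ℕ) (z : M) :
    (f ^ a) ((f ^ b) z) = (f ^ (a + b)) z := by
  rw [pow_add, Equiv.Perm.mul_apply]

lemma mulAut_zpow_apply (α : MulAut G) (a b : ℤ) (g : G) :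
    (α ^ a) ((α ^ b) g) = (α ^ (a + b)) g := by
  rw [zpow_add, MulAut.mul_apply]

lemma mulAut_apply_inv_apply (α : MulAut G) (g : G) : α (α⁻¹ g) = g := by
  simp

lemma twcN_succ_right (f : Equiv.Perm M) (α : MulAut G) (A : M → G) :
    ∀ (n : ℕ) (x : M),
      twcN f α A (n + 1) x = twcN f α A n (f x) * (α ^ n) (A x)
  | 0, x => by simp [twcN]
  | n + 1, x => by
      have h1 : (f ^ (n + 1)) x = (f ^ n) (f x) := by
        rw [pow_succ, Equiv.Perm.mul_apply]
      have h2 : α ((α ^ n) (A x)) = (α ^ (n + 1)) (A x) := by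
        rw [pow_succ', MulAut.mul_apply]
      calc twcN f α A (n + 1 + 1) x
          = A ((f ^ (n + 1)) x) * α (twcN f α A (n + 1) x) := rfl
        _ = A ((f ^ (n + 1)) x) *
              α (twcN f α A n (f x) * (α ^ n) (A x)) := by
            rw [twcN_succ_right f α A n x]
        _ = A ((f ^ n) (f x)) * (α (twcN f α A n (f x)) *
              α ((α ^ n) (A x))) := by rw [h1, map_mul]
        _ = (A ((f ^ n) (f x)) * α (twcN f α A n (f x))) *
              (α ^ (n + 1)) (A x) := by rw [h2, mul_assoc]
        _ = twcN f α A (n + 1) (f x) * (α ^ (n + 1)) (A x) := rfl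

lemma twc_natCast (f : Equiv.Perm M) (α : MulAut G) (A : M → G) (n : ℕ) (x : M) :
    twc f α A (n : ℤ) x = twcN f α A n x := rfl

lemma pow_apply_fixed (f : Equiv.Perm M) (x : M) (hx : f x = x) (n : ℕ) :
    (f ^ n) x = x := by
  induction n with
  | zero => simp
  | succ n ih => rw [pow_succ, Equiv.Perm.mul_apply, hx, ih]

lemma globalStable_mapsTo {M : Type*} [MetricSpace M] (f : Equiv.Perm M) (ε : ℝ)
    (x : M) (hx : f x = x) {y : M} (hy : y ∈ globalStable f ε x) :
    f y ∈ globalStable f ε x := by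
  obtain ⟨m, hm⟩ := hy
  refine ⟨m, fun k => ?_⟩
  have hx' : ∀ j : ℕ, (f ^ j) x = x := pow_apply_fixed f x hx
  have h1 := hm (k + 1)
  rw [hx' m, hx' (k + 1)] at h1
  show dist ((f ^ k) ((f ^ m) x)) ((f ^ k) ((f ^ m) (f y))) ≤ ε
  rw [hx' m, hx' k]
  have e1 : (f ^ m) (f y) = (f ^ (m + 1)) y := by
    rw [pow_succ, Equiv.Perm.mul_apply]
  have e2 : (f ^ k) ((f ^ m) (f y)) = (f ^ (k + 1)) ((f ^ m) y) := by
    have e3 : k + (m + 1) = k + 1 + m := by omega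
    rw [e1, perm_pow_apply, perm_pow_apply, e3]
  rw [e2]
  exact h1

lemma tendsto_alphaInv {d : ℕ} (α : MulAut (GL (Fin d) ℝ)) (K : ℝ)
    (hK : ∀ T₁ T₂ : GL (Fin d) ℝ,
      ‖((α⁻¹ T₁ : GL (Fin d) ℝ) : Matrix (Fin d) (Fin d) ℝ) -
        ((α⁻¹ T₂ : GL (Fin d) ℝ) : Matrix (Fin d) (Fin d) ℝ)‖ ≤
      K * ‖(T₁ : Matrix (Fin d) (Fin d) ℝ) - (T₂ : Matrix (Fin d) (Fin d) ℝ)‖)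
    (U : ℕ → GL (Fin d) ℝ) (L : GL (Fin d) ℝ)
    (h : Tendsto (fun n => ((U n : GL (Fin d) ℝ) : Matrix (Fin d) (Fin d) ℝ))
      atTop (nhds (L : Matrix (Fin d) (Fin d) ℝ))) :
    Tendsto (fun n => ((α⁻¹ (U n) : GL (Fin d) ℝ) : Matrix (Fin d) (Fin d) ℝ))
      atTop (nhds ((α⁻¹ L : GL (Fin d) ℝ) : Matrix (Fin d) (Fin d) ℝ)) := by
  rw [tendsto_iff_norm_sub_tendsto_zero] at h ⊢
  refine squeeze_zero (fun n => norm_nonneg _) (fun n => hK (U n) L) ?_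
  simpa using h.const_mul K

lemma hol_equivariant {M : Type*} [MetricSpace M] {d : ℕ}
    (f : Equiv.Perm M) (α : MulAut (GL (Fin d) ℝ)) (A : M → GL (Fin d) ℝ)
    (K : ℝ)
    (hK : ∀ T₁ T₂ : GL (Fin d) ℝ,
      ‖((α⁻¹ T₁ : GL (Fin d) ℝ) : Matrix (Fin d) (Fin d) ℝ) -
        ((α⁻¹ T₂ : GL (Fin d) ℝ) : Matrix (Fin d) (Fin d) ℝ)‖ ≤
      K * ‖(T₁ : Matrix (Fin d) (Fin d) ℝ) - (T₂ : Matrix (Fin d) (Fin d) ℝ)‖)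
    (x y : M) (hx : f x = x)
    (Hy Hfy : GL (Fin d) ℝ)
    (h1 : IsStableHol f α A x y Hy)
    (h2 : IsStableHol f α A x (f y) Hfy) :
    α Hy = (A y)⁻¹ * Hfy * A x := by
  set S : ℕ → GL (Fin d) ℝ :=
    fun n => (α ^ (-(n : ℤ))) ((twc f α A n (f y))⁻¹ * twc f α A n x) with hS
  have h3 := tendsto_alphaInv α K hK S Hfy h2
  have h4 := (h3.const_mul
      (((((α⁻¹ (A y))⁻¹ : GL (Fin d) ℝ)) : Matrix (Fin d) (Fin d) ℝ))).mul_const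
      (((α⁻¹ (A x) : GL (Fin d) ℝ) : Matrix (Fin d) (Fin d) ℝ))
  have key : ∀ n : ℕ,
      ((α ^ (-((n + 1 : ℕ) : ℤ)))
        ((twc f α A ((n + 1 : ℕ) : ℤ) y)⁻¹ * twc f α A ((n + 1 : ℕ) : ℤ) x)) =
      (α⁻¹ (A y))⁻¹ * α⁻¹ (S n) * α⁻¹ (A x) := by
    intro n
    have e1 : twc f α A ((n + 1 : ℕ) : ℤ) y =
        twcN f α A n (f y) * (α ^ n) (A y) := twcN_succ_right f α A n y
    have e2 : twc f α A ((n + 1 : ℕ) : ℤ) x =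
        twcN f α A n x * (α ^ n) (A x) := by
      rw [twc_natCast, twcN_succ_right, hx]
    have epow : ∀ g : GL (Fin d) ℝ,
        (α ^ (-((n + 1 : ℕ) : ℤ))) ((α ^ n) g) = α⁻¹ g := by
      intro g
      have : (α ^ n) g = (α ^ (n : ℤ)) g := by rw [zpow_natCast]
      rw [this, mulAut_zpow_apply]
      have : (-((n + 1 : ℕ) : ℤ) + n) = -1 := by push_cast; ring
      rw [this, zpow_neg_one]
    have emid : (α ^ (-((n + 1 : ℕ) : ℤ)))
        ((twcN f α A n (f y))⁻¹ * twcN f α A n x) = α⁻¹ (S n) := by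
      have : (-((n + 1 : ℕ) : ℤ)) = -1 + -(n : ℤ) := by push_cast; ring
      rw [this, ← mulAut_zpow_apply, zpow_neg_one, hS]
      rfl
    rw [e1, e2, mul_inv_rev]
    rw [show ((α ^ n) (A y))⁻¹ * (twcN f α A n (f y))⁻¹ *
        (twcN f α A n x * (α ^ n) (A x)) =
        ((α ^ n) (A y))⁻¹ * (((twcN f α A n (f y))⁻¹ * twcN f α A n x) *
          (α ^ n) (A x)) by group]
    rw [map_mul, map_mul, map_inv, epow, epow, emid]
    rw [mul_assoc]
  have h5 : Tendsto (fun n : ℕ =>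
      (((α ^ (-((n + 1 : ℕ) : ℤ)))
        ((twc f α A ((n + 1 : ℕ) : ℤ) y)⁻¹ * twc f α A ((n + 1 : ℕ) : ℤ) x) :
        GL (Fin d) ℝ) : Matrix (Fin d) (Fin d) ℝ))
      atTop (nhds ((((α⁻¹ (A y))⁻¹ * α⁻¹ Hfy * α⁻¹ (A x) : GL (Fin d) ℝ) :
        Matrix (Fin d) (Fin d) ℝ))) := by
    have hfun : (fun n : ℕ =>
        (((α ^ (-((n + 1 : ℕ) : ℤ)))
          ((twc f α A ((n + 1 : ℕ) : ℤ) y)⁻¹ * twc f α A ((n + 1 : ℕ) : ℤ) x) :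
          GL (Fin d) ℝ) : Matrix (Fin d) (Fin d) ℝ)) =
        fun n : ℕ =>
          ((((α⁻¹ (A y))⁻¹ : GL (Fin d) ℝ)) : Matrix (Fin d) (Fin d) ℝ) *
            ((α⁻¹ (S n) : GL (Fin d) ℝ) : Matrix (Fin d) (Fin d) ℝ) *
            ((α⁻¹ (A x) : GL (Fin d) ℝ) : Matrix (Fin d) (Fin d) ℝ) := by
      funext n
      rw [key n, Units.val_mul, Units.val_mul]
    rw [hfun, Units.val_mul, Units.val_mul]
    exact h4
  have h6 : Tendsto (fun n : ℕ =>
      (((α ^ (-((n + 1 : ℕ) : ℤ)))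
        ((twc f α A ((n + 1 : ℕ) : ℤ) y)⁻¹ * twc f α A ((n + 1 : ℕ) : ℤ) x) :
        GL (Fin d) ℝ) : Matrix (Fin d) (Fin d) ℝ))
      atTop (nhds (Hy : Matrix (Fin d) (Fin d) ℝ)) :=
    h1.comp (tendsto_add_atTop_nat 1)
  have heq : (Hy : Matrix (Fin d) (Fin d) ℝ) =
      (((α⁻¹ (A y))⁻¹ * α⁻¹ Hfy * α⁻¹ (A x) : GL (Fin d) ℝ) :
        Matrix (Fin d) (Fin d) ℝ) := tendsto_nhds_unique h6 h5
  have hGL : Hy = (α⁻¹ (A y))⁻¹ * α⁻¹ Hfy * α⁻¹ (A x) := Units.ext heq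
  rw [hGL, map_mul, map_mul, map_inv, mulAut_apply_inv_apply,
    mulAut_apply_inv_apply, mulAut_apply_inv_apply]

end Aux

/-- **The transfer map intertwines the cocycles on the stable set of a fixed point.**
If `x` is a fixed point of `f` with `A(x) = B(x)` and
`P(y) = H^{s,A,α}_{xy}·(H^{s,B,α}_{xy})⁻¹`, then
`A_α^n(y) = P(f^n(y)) · B_α^n(y) · α^n(P(y))⁻¹` for every `y ∈ W^s(x)` and `n ∈ ℕ`. -/
theorem transfer_map_intertwines {M : Type*} [MetricSpace M] [CompactSpace M]
    {d : ℕ} (f : M ≃ₜ M) (C ε lam τ ν : ℝ) (hν : 0 < ν)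
    (hf : IsHyperbolicLPS f C ε lam τ)
    (A B : M → GL (Fin d) ℝ) (α : MulAut (GL (Fin d) ℝ))
    (hA : IsHolder ν A) (hB : IsHolder ν B)
    (hFA : FiberBunched f.toEquiv α A ν lam) (hFB : FiberBunched f.toEquiv α B ν lam)
    (x : M) (hx : f x = x) (hAB : A x = B x)
    (HA HB : M → GL (Fin d) ℝ)
    (hHA : ∀ y ∈ globalStable f.toEquiv ε x, IsStableHol f.toEquiv α A x y (HA y))
    (hHB : ∀ y ∈ globalStable f.toEquiv ε x, IsStableHol f.toEquiv α B x y (HB y)) :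
    ∀ y ∈ globalStable f.toEquiv ε x, ∀ n : ℕ,
      twc f.toEquiv α A n y =
        (HA ((f.toEquiv ^ (n : ℤ)) y) * (HB ((f.toEquiv ^ (n : ℤ)) y))⁻¹) *
          twc f.toEquiv α B n y *
          ((α ^ (n : ℤ)) (HA y * (HB y)⁻¹))⁻¹ := by
  obtain ⟨ρ, θ, hρ, hθ, hbig, CA, hCA, hA1, hA2, hA3⟩ := hFA
  set K : ℝ := CA * Real.exp (ρ * |((-1 : ℤ) : ℝ)|) with hKdef
  have hK : ∀ T₁ T₂ : GL (Fin d) ℝ,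
      ‖((α⁻¹ T₁ : GL (Fin d) ℝ) : Matrix (Fin d) (Fin d) ℝ) -
        ((α⁻¹ T₂ : GL (Fin d) ℝ) : Matrix (Fin d) (Fin d) ℝ)‖ ≤
      K * ‖(T₁ : Matrix (Fin d) (Fin d) ℝ) - (T₂ : Matrix (Fin d) (Fin d) ℝ)‖ := by
    intro T₁ T₂
    have h := hA2 (-1) T₁ T₂
    rw [zpow_neg_one] at h
    simpa [hKdef, mul_assoc] using h
  have hx' : f.toEquiv x = x := hx
  have gsinv : ∀ z ∈ globalStable f.toEquiv ε x,
      f.toEquiv z ∈ globalStable f.toEquiv ε x :=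
    fun z hz => globalStable_mapsTo f.toEquiv ε x hx' hz
  have step : ∀ z ∈ globalStable f.toEquiv ε x,
      A z * α (HA z * (HB z)⁻¹) =
        (HA (f.toEquiv z) * (HB (f.toEquiv z))⁻¹) * B z := by
    intro z hz
    have hEA : α (HA z) = (A z)⁻¹ * HA (f.toEquiv z) * A x :=
      hol_equivariant f.toEquiv α A K hK x z hx' (HA z) (HA (f.toEquiv z))
        (hHA z hz) (hHA (f.toEquiv z) (gsinv z hz))
    have hEB : α (HB z) = (B z)⁻¹ * HB (f.toEquiv z) * B x :=
      hol_equivariant f.toEquiv α B K hK x z hx' (HB z) (HB (f.toEquiv z))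
        (hHB z hz) (hHB (f.toEquiv z) (gsinv z hz))
    rw [map_mul, map_inv, hEA, hEB, hAB]
    group
  intro y hy n
  have gsmem : ∀ m : ℕ, (f.toEquiv ^ m) y ∈ globalStable f.toEquiv ε x := by
    intro m
    induction m with
    | zero => simpa using hy
    | succ m ih =>
        have : (f.toEquiv ^ (m + 1)) y = f.toEquiv ((f.toEquiv ^ m) y) := by
          rw [pow_succ', Equiv.Perm.mul_apply]
        rw [this]
        exact gsinv _ ih
  induction n with
  | zero =>
      have h0A : twc f.toEquiv α A ((0 : ℕ) : ℤ) y = 1 := rfl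
      have h0B : twc f.toEquiv α B ((0 : ℕ) : ℤ) y = 1 := rfl
      rw [h0A, h0B, Nat.cast_zero, zpow_zero, zpow_zero]
      simp only [Equiv.Perm.coe_one, id_eq, MulAut.one_apply, mul_one, one_mul]
      group
  | succ n ih =>
      simp only [zpow_natCast, twc_natCast] at ih ⊢
      have hstep := step ((f.toEquiv ^ n) y) (gsmem n)
      have e1 : f.toEquiv ((f.toEquiv ^ n) y) = (f.toEquiv ^ (n + 1)) y := by
        rw [pow_succ', Equiv.Perm.mul_apply]
      rw [e1] at hstep
      have e2 : ∀ g : GL (Fin d) ℝ, α ((α ^ n) g) = (α ^ (n + 1)) g := by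
        intro g; rw [pow_succ', MulAut.mul_apply]
      have eA : twcN f.toEquiv α A (n + 1) y =
          A ((f.toEquiv ^ n) y) * α (twcN f.toEquiv α A n y) := rfl
      have eB : twcN f.toEquiv α B (n + 1) y =
          B ((f.toEquiv ^ n) y) * α (twcN f.toEquiv α B n y) := rfl
      rw [eA, ih, eB, map_mul, map_mul, map_inv, e2, ← mul_assoc, ← mul_assoc,
        hstep]
      group
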